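/- Let n, k be positive integers with k + 1 < n and p = k/n. Then P(Bin(n,p) ≤ k) + (n/(n+1))·P(Bin(n+1,p) > k+1) ≥ 1 − P(Bin(n,p) = k+1). -/

import Mathlib

open Finset

noncomputable def binomPMF (n : ℕ) (p : ℝ) (j : ℕ) : ℝ :=
  (n.choose j : ℝ) * p ^ j * (1 - p) ^ (n - j)

theorem psi_expectation_lower_bound (n k : ℕ) (hk : 1 ≤ k) (hkn : k + 1 < n)
    (p : ℝ) (hp : p = (k : ℝ) / (n : ℝ)) :
    (∑ j ∈ Finset.range (k + 1), binomPMF n p j)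
        + ((n : ℝ) / ((n : ℝ) + 1))
          * ∑ j ∈ Finset.Icc (k + 2) (n + 1), binomPMF (n + 1) p j
      ≥ 1 - binomPMF n p (k + 1) := by
  have hn0 : (0:ℝ) < n := by
    have : (0:ℕ) < n := by omega
    exact_mod_cast this
  have hkn' : (k:ℝ) < n := by exact_mod_cast (by omega : k < n)
  have hp0 : 0 ≤ p := by rw [hp]; positivity
  have hp1 : 0 ≤ 1 - p := by
    rw [hp]; rw [sub_nonneg, div_le_one hn0]; exact le_of_lt hkn'
  have hnneg : ∀ m j, 0 ≤ binomPMF m p j := by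
    intro m j; unfold binomPMF; positivity
  -- total sum is 1
  have hsum : ∑ j ∈ Finset.range (n+1), binomPMF n p j = 1 := by
    have h := add_pow p (1-p) n
    have hl : (p + (1-p))^n = 1 := by ring_nf
    rw [hl] at h
    rw [h]
    apply Finset.sum_congr rfl
    intro j _
    unfold binomPMF
    ring
  -- split the sum
  have hsplit : ∑ j ∈ Finset.range (n+1), binomPMF n p j
      = (∑ j ∈ Finset.range (k+1), binomPMF n p j) + binomPMF n p (k+1)
        + ∑ j ∈ Finset.Icc (k+2) n, binomPMF n p j := by
    rw [Finset.range_eq_Ico, ← Finset.sum_Ico_consecutive _ (by omega : 0 ≤ k+2) (by omega : k+2 ≤ n+1)]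
    congr 1
    rw [← Finset.range_eq_Ico, Finset.sum_range_succ]
  -- key termwise bound
  have key : ∀ j ∈ Finset.Icc (k+2) n,
      binomPMF n p j ≤ ((n:ℝ)/((n:ℝ)+1)) * binomPMF (n+1) p j := by
    intro j hj
    simp only [Finset.mem_Icc] at hj
    obtain ⟨hj1, hj2⟩ := hj
    unfold binomPMF
    have hsub : n + 1 - j = (n - j) + 1 := by omega
    rw [hsub, pow_succ]
    have hfac : (n.choose j : ℝ) ≤ ((n:ℝ)/((n:ℝ)+1)) * ((n+1).choose j : ℝ) * (1 - p) := by
      have hc : (n.choose j : ℝ) * ((n:ℝ)+1) = ((n+1).choose j : ℝ) * ((n+1-j : ℕ) : ℝ) := by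
        exact_mod_cast congrArg (Nat.cast : ℕ → ℝ) (Nat.choose_mul_succ_eq n j)
      have h1p : (1 : ℝ) - p = ((n:ℝ) - k) / n := by
        rw [hp]; field_simp
      have hcast : ((n+1-j : ℕ) : ℝ) = (n:ℝ) + 1 - j := by
        have : j ≤ n + 1 := by omega
        push_cast [this]; ring
      have hjk : (n:ℝ) + 1 - (j:ℝ) ≤ (n:ℝ) - k := by
        have : (k:ℝ) + 2 ≤ j := by exact_mod_cast hj1
        linarith
      have hcpos : (0:ℝ) < ((n+1).choose j : ℝ) := by
        have : 0 < (n+1).choose j := Nat.choose_pos (by omega)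
        exact_mod_cast this
      rw [h1p]
      have hrw : (n:ℝ)/((n:ℝ)+1) * ((n+1).choose j : ℝ) * (((n:ℝ)-k)/n)
          = ((n+1).choose j : ℝ) * ((n:ℝ)-k) / ((n:ℝ)+1) := by
        field_simp
      rw [hrw, le_div_iff₀ (by positivity)]
      calc (n.choose j : ℝ) * ((n:ℝ)+1)
          = ((n+1).choose j : ℝ) * ((n:ℝ)+1-j) := by rw [hc, hcast]
        _ ≤ ((n+1).choose j : ℝ) * ((n:ℝ)-k) :=
            mul_le_mul_of_nonneg_left hjk (le_of_lt hcpos)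
    calc (n.choose j : ℝ) * p ^ j * (1-p) ^ (n-j)
        ≤ (((n:ℝ)/((n:ℝ)+1)) * ((n+1).choose j : ℝ) * (1-p)) * (p ^ j * (1-p) ^ (n-j)) := by
          have : (n.choose j : ℝ) * p ^ j * (1-p) ^ (n-j)
              = (n.choose j : ℝ) * (p ^ j * (1-p)^(n-j)) := by ring
          rw [this]
          exact mul_le_mul_of_nonneg_right hfac (by positivity)
      _ = (n:ℝ)/((n:ℝ)+1) * (((n+1).choose j : ℝ) * p ^ j * ((1-p)^(n-j) * (1-p))) := by ring
  -- chain
  have hmono : ∑ j ∈ Finset.Icc (k+2) n, binomPMF n p j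
      ≤ ((n:ℝ)/((n:ℝ)+1)) * ∑ j ∈ Finset.Icc (k+2) (n+1), binomPMF (n+1) p j := by
    rw [Finset.mul_sum]
    calc ∑ j ∈ Finset.Icc (k+2) n, binomPMF n p j
        ≤ ∑ j ∈ Finset.Icc (k+2) n, ((n:ℝ)/((n:ℝ)+1)) * binomPMF (n+1) p j :=
          Finset.sum_le_sum key
      _ ≤ ∑ j ∈ Finset.Icc (k+2) (n+1), ((n:ℝ)/((n:ℝ)+1)) * binomPMF (n+1) p j := by
          apply Finset.sum_le_sum_of_subset_of_nonneg
          · apply Finset.Icc_subset_Icc_right; omega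
          · intro i _ _
            have := hnneg (n+1) i
            positivity
  have h1 : 1 - binomPMF n p (k+1)
      = (∑ j ∈ Finset.range (k+1), binomPMF n p j) + ∑ j ∈ Finset.Icc (k+2) n, binomPMF n p j := by
    rw [← hsum, hsplit]; ring
  rw [ge_iff_le, h1]
  linarith [hmono]
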